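/- For every ε > 0 and integer r ≥ 3, there exists δ > 0 such that: if G is a complete r-partite graph on n vertices (n sufficiently large) with parts X_1,...,X_r and N(C_4,G)/C(n,4) > 3(r−1)(r^2−3r+3)/r^3 − δ, then every part satisfies (1−ε)n/r ≤ |X_i| ≤ (1+ε)n/r. -/

import Mathlib

set_option maxRecDepth 10000
set_option maxHeartbeats 1000000

open Finset

/-- The 4-cycle `C₄` as a simple graph on `Fin 4`. -/
def cyc4 : SimpleGraph (Fin 4) := SimpleGraph.fromRel (fun i j => j = i + 1)

/-- `numCopies H G` is the number of subgraphs of `G` isomorphic to `H`: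
the number of injective graph homomorphisms `H → G` divided by the number of
injective graph homomorphisms `H → H` (the automorphisms of `H`). -/
noncomputable def numCopies {α β : Type*} (H : SimpleGraph α) (G : SimpleGraph β) : ℕ :=
  Nat.card {f : H →g G // Function.Injective f} /
    Nat.card {f : H →g H // Function.Injective f}

/-- The complete multipartite graph with parts of sizes `x 0, …, x (r-1)`. -/
def multipartite {r : ℕ} (x : Fin r → ℕ) : SimpleGraph (Σ i, Fin (x i)) :=
  SimpleGraph.completeMultipartiteGraph (fun i => Fin (x i))

variable {r : ℕ}

noncomputable def Fq {r : ℕ} (a : Fin r → ℝ) : ℝ :=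
  ∑ i, ∑ j, ∑ k, ∑ l,
    (if i ≠ j ∧ j ≠ k ∧ k ≠ l ∧ l ≠ i then a i * a j * a k * a l else 0)

noncomputable def dd {r : ℕ} (i j : Fin r) : ℝ := if i = j then 1 else 0

lemma summand_expand (a : Fin r → ℝ) (i j k l : Fin r) :
    (if i ≠ j ∧ j ≠ k ∧ k ≠ l ∧ l ≠ i then a i * a j * a k * a l else 0)
    = (1 - dd i j) * (1 - dd j k) * (1 - dd k l) * (1 - dd l i) *
      (a i * a j * a k * a l) := by
  unfold dd
  split_ifs <;> (first | ring1 | (exfalso; subst_vars; simp_all))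

lemma L2 (c : Fin r) (g : Fin r → ℝ) :
    ∑ t, (1 - dd t c) * g t = (∑ t, g t) - g c := by
  have h : ∀ t, (1 - dd t c) * g t = g t - (if t = c then g t else 0) := by
    intro t; unfold dd; split_ifs <;> ring
  rw [Finset.sum_congr rfl fun t _ => h t, Finset.sum_sub_distrib,
    Finset.sum_ite_eq' univ c g, if_pos (mem_univ c)]

lemma L2' (c : Fin r) (g : Fin r → ℝ) :
    ∑ t, (1 - dd c t) * g t = (∑ t, g t) - g c := by
  have h : ∀ t, (1 - dd c t) * g t = (1 - dd t c) * g t := by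
    intro t; unfold dd; by_cases h : c = t <;> simp [h, eq_comm] 
  rw [Finset.sum_congr rfl fun t _ => h t, L2]

lemma Ld (c : Fin r) (g : Fin r → ℝ) :
    ∑ t, dd t c * g t = g c := by
  have h : ∀ t, dd t c * g t = if t = c then g t else 0 := by
    intro t; unfold dd; split_ifs <;> ring
  rw [Finset.sum_congr rfl fun t _ => h t, Finset.sum_ite_eq' univ c g,
    if_pos (mem_univ c)]

lemma Lz (i j : Fin r) : (1 - dd i j) * dd j i = 0 := by
  unfold dd; by_cases h : i = j <;> simp [h, eq_comm]

lemma Fq_eq (a : Fin r → ℝ) :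
    Fq a = (∑ i, a i) ^ 4 - 4 * (∑ i, a i) ^ 2 * (∑ i, a i ^ 2)
      + 2 * (∑ i, a i ^ 2) ^ 2 + 4 * (∑ i, a i) * (∑ i, a i ^ 3)
      - 3 * (∑ i, a i ^ 4) := by
  set S1 := ∑ i, a i with hS1
  set S2 := ∑ i, a i ^ 2 with hS2
  set S3 := ∑ i, a i ^ 3 with hS3
  set S4 := ∑ i, a i ^ 4 with hS4
  have e1 : ∀ i j k : Fin r, (∑ l, (if i ≠ j ∧ j ≠ k ∧ k ≠ l ∧ l ≠ i
        then a i * a j * a k * a l else 0))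
      = (1 - dd i j) * (1 - dd j k) *
          ((a i * a j) * (a k * (S1 - a i - a k) + dd k i * (a k * a k))) := by
    intro i j k
    have step : ∀ l, (if i ≠ j ∧ j ≠ k ∧ k ≠ l ∧ l ≠ i
          then a i * a j * a k * a l else 0)
        = ((1 - dd i j) * (1 - dd j k) * (a i * a j * a k)) *
          ((1 - dd k l) * ((1 - dd l i) * a l)) := by
      intro l; rw [summand_expand]; ring
    rw [Finset.sum_congr rfl fun l _ => step l, ← Finset.mul_sum,
      L2' k (fun l => (1 - dd l i) * a l), L2 i a]
    rw [← hS1]; ring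
  have e2 : ∀ i j : Fin r, (∑ k, (1 - dd i j) * (1 - dd j k) *
        ((a i * a j) * (a k * (S1 - a i - a k) + dd k i * (a k * a k))))
      = (1 - dd i j) *
          ((a i * a j) * ((S1 * (S1 - a i) - S2 + a i * a i)
            - (a j * (S1 - a i - a j) + dd j i * (a j * a j)))) := by
    intro i j
    have step : ∀ k, (1 - dd i j) * (1 - dd j k) *
          ((a i * a j) * (a k * (S1 - a i - a k) + dd k i * (a k * a k)))
        = ((1 - dd i j) * (a i * a j)) *
          ((1 - dd j k) * (a k * (S1 - a i - a k) + dd k i * (a k * a k))) := by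
      intro k; ring
    rw [Finset.sum_congr rfl fun k _ => step k, ← Finset.mul_sum,
      L2' j (fun k => a k * (S1 - a i - a k) + dd k i * (a k * a k))]
    have hsplit : (∑ k, (a k * (S1 - a i - a k) + dd k i * (a k * a k)))
        = (∑ k, (a k * (S1 - a i) - a k ^ 2)) + (∑ k, dd k i * (a k * a k)) := by
      rw [← Finset.sum_add_distrib]
      exact Finset.sum_congr rfl fun k _ => by ring
    rw [hsplit, Ld i (fun k => a k * a k), Finset.sum_sub_distrib,
      ← Finset.sum_mul, ← hS1, ← hS2]
    ring
  have e3 : ∀ i : Fin r, (∑ j, (1 - dd i j) *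
        ((a i * a j) * ((S1 * (S1 - a i) - S2 + a i * a i)
          - (a j * (S1 - a i - a j) + dd j i * (a j * a j)))))
      = (a i * (S1 * (S1 - a i) - S2 + a i * a i) * S1 - a i * S1 * S2
          + (a i * a i) * S2 + a i * S3)
        - (a i * a i) * ((S1 * (S1 - a i) - S2 + a i * a i)
            - a i * (S1 - a i - a i)) := by
    intro i
    set Q := S1 * (S1 - a i) - S2 + a i * a i with hQ
    have step : ∀ j, (1 - dd i j) *
          ((a i * a j) * (Q - (a j * (S1 - a i - a j) + dd j i * (a j * a j))))
        = (1 - dd i j) * ((a i * a j) * (Q - a j * (S1 - a i - a j))) := by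
      intro j
      have h0 : (1 - dd i j) * dd j i = 0 := Lz i j
      linear_combination (-(a i * a j * (a j * a j))) * h0
    rw [Finset.sum_congr rfl fun j _ => step j,
      L2' i (fun j => (a i * a j) * (Q - a j * (S1 - a i - a j)))]
    have hsum : (∑ j, (a i * a j) * (Q - a j * (S1 - a i - a j)))
        = a i * Q * S1 - a i * S1 * S2 + (a i * a i) * S2 + a i * S3 := by
      have step2 : ∀ j, (a i * a j) * (Q - a j * (S1 - a i - a j))
          = (a i * Q) * a j - (a i * (S1 - a i)) * a j ^ 2 + a i * a j ^ 3 := by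
        intro j; ring
      rw [Finset.sum_congr rfl fun j _ => step2 j]
      rw [Finset.sum_add_distrib, Finset.sum_sub_distrib,
        ← Finset.mul_sum, ← Finset.mul_sum, ← Finset.mul_sum, ← hS1, ← hS2, ← hS3]
      try ring
    rw [hsum]
  have key : Fq a = ∑ i, ((a i * (S1 * (S1 - a i) - S2 + a i * a i) * S1
        - a i * S1 * S2 + (a i * a i) * S2 + a i * S3)
      - (a i * a i) * ((S1 * (S1 - a i) - S2 + a i * a i)
          - a i * (S1 - a i - a i))) := by
    unfold Fq
    refine Finset.sum_congr rfl fun i _ => ?_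
    rw [Finset.sum_congr rfl fun j (_ : j ∈ univ) =>
      (by rw [Finset.sum_congr rfl fun k (_ : k ∈ univ) => e1 i j k, e2 i j] :
        (∑ k, ∑ l, (if i ≠ j ∧ j ≠ k ∧ k ≠ l ∧ l ≠ i
            then a i * a j * a k * a l else 0)) = _)]
    exact e3 i
  rw [key]
  have final : ∀ i : Fin r, ((a i * (S1 * (S1 - a i) - S2 + a i * a i) * S1
        - a i * S1 * S2 + (a i * a i) * S2 + a i * S3)
      - (a i * a i) * ((S1 * (S1 - a i) - S2 + a i * a i)
          - a i * (S1 - a i - a i)))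
      = (S1 ^ 3 - 2 * S1 * S2 + S3) * a i + (-2 * S1 ^ 2 + 2 * S2) * a i ^ 2
        + (3 * S1) * a i ^ 3 + (-3) * a i ^ 4 := by
    intro i; ring
  rw [Finset.sum_congr rfl fun i _ => final i]
  rw [Finset.sum_add_distrib, Finset.sum_add_distrib, Finset.sum_add_distrib,
    ← Finset.mul_sum, ← Finset.mul_sum, ← Finset.mul_sum, ← Finset.mul_sum,
    ← hS1, ← hS2, ← hS3, ← hS4]
  ring

lemma sum_update2 {i j : Fin r} (hij : i ≠ j) (c : Fin r → ℝ) (v : ℝ)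
    (p : ℝ → ℝ) :
    ∑ t, p (Function.update (Function.update c i v) j v t)
      = 2 * p v + (∑ t, p (c t)) - p (c i) - p (c j) := by
  have h1 : ∀ (f : Fin r → ℝ) (b : Fin r) (w : ℝ),
      (fun t => p (Function.update f b w t)) = Function.update (fun t => p (f t)) b (p w) := by
    intro f b w; funext t
    by_cases h : t = b
    · subst h; simp
    · simp [Function.update_of_ne h]
  rw [show (fun t => p ((Function.update (Function.update c i v) j v) t)) = _ from rfl]
  calc ∑ t, p (Function.update (Function.update c i v) j v t)
      = ∑ t, Function.update (fun t => p (Function.update c i v t)) j (p v) t := by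
        rw [h1]
    _ = p v + ∑ t ∈ univ.erase j, p (Function.update c i v t) := by
        rw [← Finset.add_sum_erase _ _ (mem_univ j)]
        congr 1
        · simp
        · exact Finset.sum_congr rfl fun t ht => by
            rw [Function.update_of_ne (Finset.ne_of_mem_erase ht)]
    _ = p v + ∑ t ∈ univ.erase j, Function.update (fun t => p (c t)) i (p v) t := by
        rw [h1]
    _ = p v + (p v + ∑ t ∈ (univ.erase j).erase i, p (c t)) := by
        congr 1
        rw [← Finset.add_sum_erase _ _ (Finset.mem_erase.2 ⟨hij, mem_univ i⟩)]
        congr 1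
        · simp
        · exact Finset.sum_congr rfl fun t ht => by
            rw [Function.update_of_ne (Finset.ne_of_mem_erase ht)]
    _ = 2 * p v + (∑ t, p (c t)) - p (c i) - p (c j) := by
        rw [Finset.sum_erase_eq_sub (Finset.mem_erase.2 ⟨hij, mem_univ i⟩),
          Finset.sum_erase_eq_sub (mem_univ j)]
        ring

lemma balance (a : Fin r → ℝ) (ha : a ∈ stdSimplex ℝ (Fin r)) {i j : Fin r}
    (hij : i ≠ j) (hne : a i ≠ a j) :
    Fq a < Fq (Function.update (Function.update a i ((a i + a j)/2)) j ((a i + a j)/2)) := by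
  obtain ⟨hnn, hsum⟩ := ha
  set v := (a i + a j) / 2 with hv
  have hS1 : ∑ t, a t = 1 := hsum
  -- sums of powers of updated function
  have e1 := sum_update2 hij a v (fun t => t)
  have e2 := sum_update2 hij a v (fun t => t ^ 2)
  have e3 := sum_update2 hij a v (fun t => t ^ 3)
  have e4 := sum_update2 hij a v (fun t => t ^ 4)
  -- facts
  have hm1 : a i + a j ≤ 1 := by
    have : ∑ t ∈ (univ.erase j).erase i, a t = 1 - a i - a j := by
      rw [Finset.sum_erase_eq_sub (Finset.mem_erase.2 ⟨hij, mem_univ i⟩),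
        Finset.sum_erase_eq_sub (mem_univ j), hS1]
      ring
    nlinarith [Finset.sum_nonneg (fun t (_ : t ∈ (univ.erase j).erase i) => hnn t), this]
  have hE2 : (∑ t, a t ^ 2) - a i ^ 2 - a j ^ 2 ≤ (1 - a i - a j) ^ 2 := by
    set s := (univ.erase j).erase i with hs
    have hsubsum : ∑ t ∈ s, a t = 1 - a i - a j := by
      rw [hs, Finset.sum_erase_eq_sub (Finset.mem_erase.2 ⟨hij, mem_univ i⟩),
        Finset.sum_erase_eq_sub (mem_univ j), hS1]
      ring
    have hsub2 : ∑ t ∈ s, a t ^ 2 = (∑ t, a t ^ 2) - a i ^ 2 - a j ^ 2 := by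
      rw [hs, Finset.sum_erase_eq_sub (Finset.mem_erase.2 ⟨hij, mem_univ i⟩),
        Finset.sum_erase_eq_sub (mem_univ j)]
      ring
    have hbd : ∑ t ∈ s, a t ^ 2 ≤ (∑ t ∈ s, a t) * (∑ t ∈ s, a t) := by
      rw [Finset.sum_mul]
      refine Finset.sum_le_sum fun t ht => ?_
      have h1 : a t ≤ ∑ u ∈ s, a u :=
        Finset.single_le_sum (fun u _ => hnn u) ht
      nlinarith [hnn t]
    rw [hsubsum] at hbd; rw [← hsub2]; nlinarith [hbd]
  have hd0 : a i - a j ≠ 0 := sub_ne_zero.mpr hne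
  have hd2 : (0:ℝ) < (a i - a j) ^ 2 :=
    lt_of_le_of_ne (sq_nonneg _) (Ne.symm (pow_ne_zero 2 hd0))
  have hmpos : 0 < a i + a j := by
    rcases lt_or_ge 0 (a i + a j) with h | h
    · exact h
    · exfalso
      have := hnn i; have := hnn j
      apply hne; nlinarith
  have hdm : (a i - a j) ^ 2 ≤ (a i + a j) ^ 2 := by
    nlinarith [mul_nonneg (hnn i) (hnn j)]
  have hDelta : Fq (Function.update (Function.update a i v) j v) - Fq a
      = (a i - a j) ^ 2 * (2 - 2 * ((∑ t, a t ^ 2) - a i ^ 2 - a j ^ 2)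
          + (5/4) * (a i + a j) ^ 2 - 3 * (a i + a j) - (a i - a j) ^ 2 / 8) := by
    rw [Fq_eq, Fq_eq, e1, e2, e3, e4, hS1, hv]; ring
  have hbr : (a i + a j) / 8 ≤ 2 - 2 * ((∑ t, a t ^ 2) - a i ^ 2 - a j ^ 2)
      + (5/4) * (a i + a j) ^ 2 - 3 * (a i + a j) - (a i - a j) ^ 2 / 8 := by
    nlinarith [hE2, hm1, hdm, hmpos]
  have : 0 < Fq (Function.update (Function.update a i v) j v) - Fq a := by
    rw [hDelta]
    have h8 : 0 < (a i + a j) / 8 := by linarith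
    exact mul_pos hd2 (lt_of_lt_of_le h8 hbr)
  linarith

noncomputable def center (r : ℕ) : Fin r → ℝ := fun _ => 1 / r

lemma center_mem (hr : 0 < r) : center r ∈ stdSimplex ℝ (Fin r) := by
  have hr' : (r:ℝ) ≠ 0 := Nat.cast_ne_zero.mpr hr.ne'
  constructor
  · intro i; unfold center; positivity
  · unfold center
    rw [Finset.sum_const, card_univ, Fintype.card_fin, nsmul_eq_mul]
    field_simp

lemma Fq_center (hr : 0 < r) :
    Fq (center r) = ((r:ℝ) - 1) * ((r:ℝ)^2 - 3*r + 3) / (r:ℝ)^3 := by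
  have hr' : (r:ℝ) ≠ 0 := Nat.cast_ne_zero.mpr hr.ne'
  rw [Fq_eq]
  unfold center
  simp only [Finset.sum_const, card_univ, Fintype.card_fin, nsmul_eq_mul]
  field_simp
  ring

lemma Fq_cont : Continuous (Fq (r := r)) := by
  unfold Fq
  refine continuous_finset_sum _ fun i _ => continuous_finset_sum _ fun j _ =>
    continuous_finset_sum _ fun k _ => continuous_finset_sum _ fun l _ => ?_
  split_ifs
  · fun_prop
  · exact continuous_const

lemma exists_ne_pair (hr : 0 < r) (a : Fin r → ℝ) (ha : a ∈ stdSimplex ℝ (Fin r))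
    (hne : a ≠ center r) : ∃ i j, i ≠ j ∧ a i ≠ a j := by
  by_contra h
  push_neg at h
  apply hne; funext t
  have hall : ∀ i j : Fin r, a i = a j := by
    intro i j
    rcases eq_or_ne i j with rfl | hij
    · rfl
    · by_contra hne2; exact hne2 (h i j hij)
  have hsum : (∑ i, a i) = r * a t := by
    rw [Finset.sum_congr rfl fun i _ => hall i t, Finset.sum_const, card_univ,
      Fintype.card_fin, nsmul_eq_mul]
  have h1 : (r:ℝ) * a t = 1 := by rw [← hsum]; exact ha.2
  have hr' : (r:ℝ) ≠ 0 := Nat.cast_ne_zero.mpr hr.ne'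
  unfold center
  field_simp
  linarith [h1]

lemma update_mem (a : Fin r → ℝ) (ha : a ∈ stdSimplex ℝ (Fin r)) {i j : Fin r}
    (hij : i ≠ j) :
    Function.update (Function.update a i ((a i + a j)/2)) j ((a i + a j)/2)
      ∈ stdSimplex ℝ (Fin r) := by
  obtain ⟨hnn, hsum⟩ := ha
  have hv : 0 ≤ (a i + a j) / 2 := by have := hnn i; have := hnn j; linarith
  constructor
  · intro t
    rcases eq_or_ne t j with rfl | hj
    · simpa using hv
    · rw [Function.update_of_ne hj]
      rcases eq_or_ne t i with rfl | hi
      · simpa using hv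
      · rw [Function.update_of_ne hi]; exact hnn t
  · have := sum_update2 hij a ((a i + a j)/2) (fun t => t)
    rw [this, hsum]; ring

lemma max_center (hr : 0 < r) :
    ∀ a ∈ stdSimplex ℝ (Fin r), a ≠ center r → Fq a < Fq (center r) := by
  obtain ⟨b, hb, hmax⟩ := (isCompact_stdSimplex ℝ (Fin r)).exists_isMaxOn
    ⟨center r, center_mem hr⟩ Fq_cont.continuousOn
  have hbc : b = center r := by
    by_contra hbc
    obtain ⟨i, j, hij, hne⟩ := exists_ne_pair hr b hb hbc
    have hlt := balance b hb hij hne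
    have hmem := update_mem b hb hij
    exact absurd (hmax hmem) (not_le.mpr hlt)
  intro a ha hne
  obtain ⟨i, j, hij, hne'⟩ := exists_ne_pair hr a ha hne
  have h1 := balance a ha hij hne'
  have h2 : Fq (Function.update (Function.update a i ((a i + a j)/2)) j
      ((a i + a j)/2)) ≤ Fq b := hmax (update_mem a ha hij)
  rw [hbc] at h2
  linarith

lemma stability_delta (hr : 0 < r) (ε : ℝ) (hε : 0 < ε) :
    ∃ δ0 : ℝ, 0 < δ0 ∧ ∀ a ∈ stdSimplex ℝ (Fin r),
      (∃ i : Fin r, a i ≤ (1 - ε)/r ∨ (1 + ε)/r ≤ a i) →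
      Fq a ≤ Fq (center r) - δ0 := by
  set K : Set (Fin r → ℝ) :=
    stdSimplex ℝ (Fin r) ∩ {a | ∃ i, a i ≤ (1 - ε)/r ∨ (1 + ε)/r ≤ a i} with hK
  by_cases hKne : K.Nonempty
  · have hclosed : IsClosed {a : Fin r → ℝ | ∃ i, a i ≤ (1 - ε)/r ∨ (1 + ε)/r ≤ a i} := by
      rw [Set.setOf_exists]
      refine isClosed_iUnion_of_finite fun i => ?_
      have h1 : IsClosed {a : Fin r → ℝ | a i ≤ (1 - ε)/r} :=
        isClosed_le (continuous_apply i) continuous_const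
      have h2 : IsClosed {a : Fin r → ℝ | (1 + ε)/r ≤ a i} :=
        isClosed_le continuous_const (continuous_apply i)
      exact h1.union h2
    have hKc : IsCompact K := (isCompact_stdSimplex ℝ (Fin r)).inter_right hclosed
    obtain ⟨b, hbK, hbmax⟩ := hKc.exists_isMaxOn hKne Fq_cont.continuousOn
    have hbne : b ≠ center r := by
      intro hbc
      obtain ⟨i, hi⟩ := hbK.2
      rw [hbc] at hi
      have hr' : (0:ℝ) < r := Nat.cast_pos.mpr hr
      unfold center at hi
      rcases hi with hi | hi
      · have h2 : (1:ℝ) ≤ 1 - ε := (div_le_div_iff_of_pos_right hr').mp hi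
        linarith
      · have h2 : (1:ℝ) + ε ≤ 1 := (div_le_div_iff_of_pos_right hr').mp hi
        linarith
    refine ⟨Fq (center r) - Fq b, by linarith [max_center hr b hbK.1 hbne], ?_⟩
    intro a ha hex
    have : Fq a ≤ Fq b := hbmax ⟨ha, hex⟩
    linarith
  · refine ⟨1, one_pos, fun a ha hex => absurd ⟨ha, hex⟩ (fun h => hKne ⟨a, h⟩)⟩

/-- the eight automorphisms of C4 as raw functions -/
def aut8 : Fin 8 → Fin 4 → Fin 4 :=
  ![![0,1,2,3], ![1,2,3,0], ![2,3,0,1], ![3,0,1,2],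
    ![0,3,2,1], ![1,0,3,2], ![2,1,0,3], ![3,2,1,0]]

lemma aut8_adj : ∀ (k : Fin 8) (i j : Fin 4), cyc4.Adj i j →
    cyc4.Adj (aut8 k i) (aut8 k j) := by
  simp only [cyc4, SimpleGraph.fromRel_adj]
  decide

lemma aut8_inj : ∀ k : Fin 8, Function.Injective (aut8 k) := by decide

lemma aut8_injective : Function.Injective aut8 := by decide

noncomputable instance : Finite (cyc4 →g cyc4) :=
  Finite.of_injective (fun f => (f : Fin 4 → Fin 4)) DFunLike.coe_injective

lemma eight_le_aut : 8 ≤ Nat.card {f : cyc4 →g cyc4 // Function.Injective f} := by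
  have hg : Function.Injective
      (fun k : Fin 8 => (⟨⟨aut8 k, fun {a b} hab => aut8_adj k a b hab⟩, aut8_inj k⟩ :
        {f : cyc4 →g cyc4 // Function.Injective f})) := by
    intro a b hab
    apply aut8_injective
    exact congrArg (fun s => ((s : {f : cyc4 →g cyc4 // Function.Injective f}).1 :
      Fin 4 → Fin 4)) hab
  have := Nat.card_le_card_of_injective _ hg
  simpa using this

/-- the count of constrained quadruples, ℕ version -/
def N4 (x : Fin r → ℕ) : ℕ :=
  ∑ i, ∑ j, ∑ k, ∑ l,
    x i * (x j * (x k * (x l * (if i ≠ j ∧ j ≠ k ∧ k ≠ l ∧ l ≠ i then 1 else 0))))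

lemma sum_sigma_card (x : Fin r → ℕ) (g : Fin r → ℕ) :
    ∑ v : (Σ i, Fin (x i)), g v.1 = ∑ i, x i * g i := by
  rw [← Finset.univ_sigma_univ, Finset.sum_sigma]
  simp [Finset.sum_const, mul_comm]

lemma sum_sigma_card4 (x : Fin r → ℕ) (f : Fin r → Fin r → Fin r → Fin r → ℕ) :
    ∑ v0 : (Σ i, Fin (x i)), ∑ v1 : (Σ i, Fin (x i)), ∑ v2 : (Σ i, Fin (x i)),
      ∑ v3 : (Σ i, Fin (x i)), f v0.1 v1.1 v2.1 v3.1
    = ∑ i, x i * (∑ j, x j * (∑ k, x k * (∑ l, x l * f i j k l))) := by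
  calc ∑ v0 : (Σ i, Fin (x i)), ∑ v1 : (Σ i, Fin (x i)), ∑ v2 : (Σ i, Fin (x i)),
        ∑ v3 : (Σ i, Fin (x i)), f v0.1 v1.1 v2.1 v3.1
      = ∑ i, x i * (∑ v1 : (Σ i, Fin (x i)), ∑ v2 : (Σ i, Fin (x i)),
          ∑ v3 : (Σ i, Fin (x i)), f i v1.1 v2.1 v3.1) :=
        sum_sigma_card x (fun i => ∑ v1 : (Σ i, Fin (x i)), ∑ v2 : (Σ i, Fin (x i)),
          ∑ v3 : (Σ i, Fin (x i)), f i v1.1 v2.1 v3.1)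
    _ = ∑ i, x i * (∑ j, x j * (∑ k, x k * (∑ l, x l * f i j k l))) := by
        refine Finset.sum_congr rfl fun i _ => ?_
        congr 1
        calc ∑ v1 : (Σ i, Fin (x i)), ∑ v2 : (Σ i, Fin (x i)),
              ∑ v3 : (Σ i, Fin (x i)), f i v1.1 v2.1 v3.1
            = ∑ j, x j * (∑ v2 : (Σ i, Fin (x i)),
                ∑ v3 : (Σ i, Fin (x i)), f i j v2.1 v3.1) :=
              sum_sigma_card x (fun j => ∑ v2 : (Σ i, Fin (x i)),
                ∑ v3 : (Σ i, Fin (x i)), f i j v2.1 v3.1)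
          _ = ∑ j, x j * (∑ k, x k * (∑ l, x l * f i j k l)) := by
              refine Finset.sum_congr rfl fun j _ => ?_
              congr 1
              calc ∑ v2 : (Σ i, Fin (x i)), ∑ v3 : (Σ i, Fin (x i)), f i j v2.1 v3.1
                  = ∑ k, x k * (∑ v3 : (Σ i, Fin (x i)), f i j k v3.1) :=
                    sum_sigma_card x (fun k => ∑ v3 : (Σ i, Fin (x i)), f i j k v3.1)
                _ = ∑ k, x k * (∑ l, x l * f i j k l) := by
                    refine Finset.sum_congr rfl fun k _ => ?_
                    congr 1
                    exact sum_sigma_card x (fun l => f i j k l)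

def N4' (x : Fin r → ℕ) : ℕ :=
  ∑ i, x i * (∑ j, x j * (∑ k, x k * (∑ l, x l *
    (if i ≠ j ∧ j ≠ k ∧ k ≠ l ∧ l ≠ i then 1 else 0))))

lemma card_quadruples (x : Fin r → ℕ) :
    Nat.card {q : (Σ i, Fin (x i)) × (Σ i, Fin (x i)) × (Σ i, Fin (x i)) × (Σ i, Fin (x i)) //
        q.1.1 ≠ q.2.1.1 ∧ q.2.1.1 ≠ q.2.2.1.1 ∧ q.2.2.1.1 ≠ q.2.2.2.1 ∧ q.2.2.2.1 ≠ q.1.1}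
      = N4' x := by
  rw [Nat.card_eq_fintype_card, Fintype.card_subtype, Finset.card_filter]
  rw [Fintype.sum_prod_type]
  simp only [Fintype.sum_prod_type]
  exact sum_sigma_card4 x (fun i j k l => if i ≠ j ∧ j ≠ k ∧ k ≠ l ∧ l ≠ i then 1 else 0)

lemma cyc4_adjs : cyc4.Adj 0 1 ∧ cyc4.Adj 1 2 ∧ cyc4.Adj 2 3 ∧ cyc4.Adj 3 0 := by
  simp only [cyc4, SimpleGraph.fromRel_adj]
  decide

lemma homs_le (x : Fin r → ℕ) :
    Nat.card {f : cyc4 →g multipartite x // Function.Injective f} ≤ N4' x := by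
  rw [← card_quadruples x]
  have hinj : Function.Injective
      (fun f : {f : cyc4 →g multipartite x // Function.Injective f} =>
        (⟨(f.1 0, f.1 1, f.1 2, f.1 3),
          f.1.map_adj cyc4_adjs.1, f.1.map_adj cyc4_adjs.2.1,
          f.1.map_adj cyc4_adjs.2.2.1, f.1.map_adj cyc4_adjs.2.2.2⟩ :
          {q : (Σ i, Fin (x i)) × (Σ i, Fin (x i)) × (Σ i, Fin (x i)) × (Σ i, Fin (x i)) //
            q.1.1 ≠ q.2.1.1 ∧ q.2.1.1 ≠ q.2.2.1.1 ∧ q.2.2.1.1 ≠ q.2.2.2.1 ∧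
              q.2.2.2.1 ≠ q.1.1})) := by
    intro f g h
    have h0 : f.1 0 = g.1 0 := congrArg (fun s => s.1.1) h
    have h1 : f.1 1 = g.1 1 := congrArg (fun s => s.1.2.1) h
    have h2 : f.1 2 = g.1 2 := congrArg (fun s => s.1.2.2.1) h
    have h3 : f.1 3 = g.1 3 := congrArg (fun s => s.1.2.2.2) h
    refine Subtype.ext (DFunLike.ext _ _ ?_)
    intro v
    fin_cases v <;> assumption
  exact Nat.card_le_card_of_injective _ hinj

lemma numCopies_le (x : Fin r → ℕ) :
    numCopies cyc4 (multipartite x) ≤ N4' x / 8 := by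
  unfold numCopies
  calc Nat.card {f : cyc4 →g multipartite x // Function.Injective f} /
        Nat.card {f : cyc4 →g cyc4 // Function.Injective f}
      ≤ Nat.card {f : cyc4 →g multipartite x // Function.Injective f} / 8 :=
        Nat.div_le_div_left eight_le_aut (by norm_num)
    _ ≤ N4' x / 8 := Nat.div_le_div_right (homs_le x)

lemma N4'_cast (x : Fin r → ℕ) : (N4' x : ℝ) = Fq (fun i => (x i : ℝ)) := by
  unfold N4' Fq
  push_cast
  simp only [Finset.mul_sum]
  refine Finset.sum_congr rfl fun i _ => Finset.sum_congr rfl fun j _ =>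
    Finset.sum_congr rfl fun k _ => Finset.sum_congr rfl fun l _ => ?_
  split_ifs <;> simp <;> ring

lemma choose4_cast {n : ℕ} (hn : 4 ≤ n) :
    (n.choose 4 : ℝ) = n * ((n:ℝ) - 1) * ((n:ℝ) - 2) * ((n:ℝ) - 3) / 24 := by
  have h : n.descFactorial 4 = 24 * n.choose 4 := by
    rw [Nat.descFactorial_eq_factorial_mul_choose]
    norm_num [Nat.factorial]
  have h2 : n.descFactorial 4 = (n - 3) * ((n - 2) * ((n - 1) * n)) := by
    simp [Nat.descFactorial_succ, Nat.descFactorial_zero]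
  have h3 : ((n - 3 : ℕ) : ℝ) = (n:ℝ) - 3 := by
    rw [Nat.cast_sub (by omega)]; norm_num
  have h4 : ((n - 2 : ℕ) : ℝ) = (n:ℝ) - 2 := by
    rw [Nat.cast_sub (by omega)]; norm_num
  have h5 : ((n - 1 : ℕ) : ℝ) = (n:ℝ) - 1 := by
    rw [Nat.cast_sub (by omega)]; norm_num
  have h6 := congrArg (Nat.cast : ℕ → ℝ) (h.symm.trans h2)
  push_cast at h6
  rw [h3, h4, h5] at h6
  linarith

/-- Stability lemma for almost optimal complete `r`-partite graphs: if the
`C₄`-density of a complete `r`-partite graph on `n` vertices is within `δ` of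
the optimum `3(r-1)(r²-3r+3)/r³`, then all parts have size between
`(1-ε)n/r` and `(1+ε)n/r`. -/
theorem stability_complete_multipartite {r : ℕ} (hr : 3 ≤ r) (ε : ℝ) (hε : 0 < ε) :
    ∃ δ : ℝ, 0 < δ ∧ ∃ N : ℕ, ∀ n : ℕ, N ≤ n → ∀ x : Fin r → ℕ, (∑ i, x i) = n →
      3 * ((r : ℝ) - 1) * ((r : ℝ) ^ 2 - 3 * r + 3) / (r : ℝ) ^ 3 - δ <
        (numCopies cyc4 (multipartite x) : ℝ) / (n.choose 4 : ℝ) →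
      ∀ i : Fin r,
        (1 - ε) * n / r ≤ (x i : ℝ) ∧ (x i : ℝ) ≤ (1 + ε) * n / r := by
  have hr0 : 0 < r := by omega
  have hrR : (3:ℝ) ≤ (r:ℝ) := by exact_mod_cast hr
  have hrpos : (0:ℝ) < (r:ℝ) := by linarith
  set φ := Fq (center r) with hφdef
  have hφval : φ = ((r:ℝ) - 1) * ((r:ℝ)^2 - 3*r + 3) / (r:ℝ)^3 := Fq_center hr0
  have hφpos : 0 < φ := by
    rw [hφval]
    have h1 : (0:ℝ) < (r:ℝ) - 1 := by linarith
    have h2 : (0:ℝ) < (r:ℝ)^2 - 3*r + 3 := by nlinarith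
    positivity
  obtain ⟨δ0, hδ0, hst⟩ := stability_delta hr0 ε hε
  set δ1 := min δ0 (φ/2) with hδ1def
  have hδ1pos : 0 < δ1 := lt_min hδ0 (by linarith)
  have hδ1le : δ1 ≤ δ0 := min_le_left _ _
  have hδ1φ : δ1 ≤ φ/2 := min_le_right _ _
  set θ := δ1 / (4*φ + 4) with hθdef
  have hθpos : 0 < θ := by apply div_pos hδ1pos; linarith
  have hθlt : θ < 1/2 := by
    rw [hθdef, div_lt_iff₀ (by linarith : (0:ℝ) < 4*φ + 4)]
    nlinarith
  refine ⟨δ1, hδ1pos, max 4 (⌈(12:ℝ)/θ⌉₊ + 1), ?_⟩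
  intro n hn x hx hdens i
  have hn4 : 4 ≤ n := le_trans (le_max_left _ _) hn
  have hnR : (4:ℝ) ≤ (n:ℝ) := by exact_mod_cast hn4
  have hnpos : (0:ℝ) < (n:ℝ) := by linarith
  have hθn : (12:ℝ) ≤ θ * n := by
    have h1 : (⌈(12:ℝ)/θ⌉₊ + 1 : ℕ) ≤ n := le_trans (le_max_right _ _) hn
    have h2 : (12:ℝ)/θ ≤ (⌈(12:ℝ)/θ⌉₊ : ℝ) := Nat.le_ceil _
    have h3 : ((⌈(12:ℝ)/θ⌉₊ : ℝ) + 1) ≤ (n:ℝ) := by exact_mod_cast h1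
    rw [div_le_iff₀ hθpos] at h2
    nlinarith
  by_contra hcon
  push_neg at hcon
  -- the normalized vector
  set a : Fin r → ℝ := fun t => (x t : ℝ) / n with hadef
  have hsum : ∑ t, a t = 1 := by
    rw [hadef]
    rw [← Finset.sum_div]
    rw [show ∑ t, ((x t : ℝ)) = (n:ℝ) by exact_mod_cast congrArg (fun m : ℕ => (m:ℝ)) hx]
    exact div_self (ne_of_gt hnpos)
  have ha : a ∈ stdSimplex ℝ (Fin r) := by
    refine ⟨fun t => by rw [hadef]; positivity, hsum⟩
  have hviol : a i ≤ (1 - ε)/r ∨ (1 + ε)/r ≤ a i := by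
    rcases le_or_gt ((1-ε) * n / r) (x i) with h | h
    · right
      have h2 := hcon h
      have hgoal : (1+ε)/r ≤ (x i : ℝ)/n := by
        rw [div_le_div_iff₀ hrpos hnpos]
        rw [div_lt_iff₀ hrpos] at h2
        nlinarith
      simpa [hadef] using hgoal
    · left
      have hgoal : (x i : ℝ)/n ≤ (1-ε)/r := by
        rw [div_le_div_iff₀ hnpos hrpos]
        rw [lt_div_iff₀ hrpos] at h
        nlinarith
      simpa [hadef] using hgoal
  have hFa : Fq a ≤ φ - δ1 := le_trans (hst a ha ⟨i, hviol⟩) (by linarith)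
  -- homogeneity
  have hhom : Fq (fun t => (x t : ℝ)) = (n:ℝ)^4 * Fq a := by
    have e1 : ∑ t, a t = (∑ t, (x t:ℝ)) / n := by rw [hadef, ← Finset.sum_div]
    have e2 : ∑ t, a t ^ 2 = (∑ t, (x t:ℝ)^2) / n^2 := by
      rw [hadef]; simp only [div_pow]; rw [← Finset.sum_div]
    have e3 : ∑ t, a t ^ 3 = (∑ t, (x t:ℝ)^3) / n^3 := by
      rw [hadef]; simp only [div_pow]; rw [← Finset.sum_div]
    have e4 : ∑ t, a t ^ 4 = (∑ t, (x t:ℝ)^4) / n^4 := by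
      rw [hadef]; simp only [div_pow]; rw [← Finset.sum_div]
    rw [Fq_eq, Fq_eq, e1, e2, e3, e4]
    field_simp
  -- numCopies bound
  have hnc : (numCopies cyc4 (multipartite x) : ℝ) ≤ (n:ℝ)^4 * Fq a / 8 := by
    have h1 : (numCopies cyc4 (multipartite x) : ℝ) ≤ ((N4' x / 8 : ℕ) : ℝ) := by
      exact_mod_cast numCopies_le x
    have h2 : ((N4' x / 8 : ℕ) : ℝ) ≤ (N4' x : ℝ) / 8 := Nat.cast_div_le
    rw [N4'_cast, hhom] at h2
    linarith
  -- choose bound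
  have hcc : (n.choose 4 : ℝ) = (n:ℝ) * ((n:ℝ)-1) * ((n:ℝ)-2) * ((n:ℝ)-3) / 24 :=
    choose4_cast hn4
  have h12 : 12*(n:ℝ)^3 ≤ θ*(n:ℝ)^4 := by nlinarith [hθn, pow_pos hnpos 3]
  have hone : (1:ℝ) ≤ (n:ℝ) := by linarith
  have hsq : (n:ℝ) ≤ (n:ℝ)^2 := by nlinarith [mul_le_mul_of_nonneg_left hone hnpos.le]
  have hcube : (n:ℝ) ≤ (n:ℝ)^3 := by nlinarith [mul_le_mul_of_nonneg_left hsq hnpos.le, hsq]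
  have hprod : (1 - θ) * (n:ℝ)^4 ≤ (n:ℝ) * ((n:ℝ)-1) * ((n:ℝ)-2) * ((n:ℝ)-3) := by
    nlinarith [h12, hnpos, hnR, hcube, sq_nonneg ((n:ℝ))]
  have hn1 : (0:ℝ) < (n:ℝ) - 1 := by linarith
  have hn2 : (0:ℝ) < (n:ℝ) - 2 := by linarith
  have hn3 : (0:ℝ) < (n:ℝ) - 3 := by linarith
  have hchoosepos : (0:ℝ) < (n.choose 4 : ℝ) := by
    rw [hcc]
    exact div_pos (mul_pos (mul_pos (mul_pos hnpos hn1) hn2) hn3) (by norm_num)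
  -- final density chain
  have hFann : 0 ≤ Fq a := by
    rw [hadef]
    unfold Fq
    refine Finset.sum_nonneg fun i1 _ => Finset.sum_nonneg fun j1 _ =>
      Finset.sum_nonneg fun k1 _ => Finset.sum_nonneg fun l1 _ => ?_
    split_ifs
    · positivity
    · exact le_rfl
  have hθeq : θ * (4*φ + 4) = δ1 := by
    rw [hθdef]; field_simp
  have h3φ : 0 < 3*φ - δ1 := by linarith
  have key : 3*(φ - δ1) ≤ (3*φ - δ1)*(1 - θ) := by
    nlinarith [hθeq, mul_nonneg hθpos.le hφpos.le, mul_nonneg hθpos.le hδ1pos.le]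
  have hPpos : (0:ℝ) < (n:ℝ) * ((n:ℝ)-1) * ((n:ℝ)-2) * ((n:ℝ)-3) :=
    mul_pos (mul_pos (mul_pos hnpos hn1) hn2) hn3
  have hb2 : (n:ℝ)^4 * (φ - δ1) / 8 / (n.choose 4 : ℝ) ≤ 3*φ - δ1 := by
    rw [hcc, div_le_iff₀ (by positivity : (0:ℝ) < (n:ℝ) * ((n:ℝ)-1) * ((n:ℝ)-2) * ((n:ℝ)-3) / 24)]
    have key2 : (3*φ - δ1)*((1-θ)*(n:ℝ)^4)
        ≤ (3*φ - δ1)*((n:ℝ) * ((n:ℝ)-1) * ((n:ℝ)-2) * ((n:ℝ)-3)) :=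
      mul_le_mul_of_nonneg_left hprod h3φ.le
    nlinarith [key2, mul_le_mul_of_nonneg_left key (pow_nonneg hnpos.le 4)]
  have hdens2 : (numCopies cyc4 (multipartite x) : ℝ) / (n.choose 4 : ℝ) ≤ 3*φ - δ1 := by
    have hnum : (numCopies cyc4 (multipartite x) : ℝ) ≤ (n:ℝ)^4 * (φ - δ1) / 8 := by
      nlinarith [hnc, mul_le_mul_of_nonneg_left hFa (by positivity : (0:ℝ) ≤ (n:ℝ)^4)]
    calc (numCopies cyc4 (multipartite x) : ℝ) / (n.choose 4 : ℝ)
        ≤ ((n:ℝ)^4 * (φ - δ1) / 8) / (n.choose 4 : ℝ) :=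
          (div_le_div_iff_of_pos_right hchoosepos).mpr hnum
      _ ≤ 3*φ - δ1 := hb2
  have hconst : 3 * ((r : ℝ) - 1) * ((r : ℝ) ^ 2 - 3 * r + 3) / (r : ℝ) ^ 3 = 3*φ := by
    rw [hφval]; ring
  rw [hconst] at hdens
  linarith
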